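/- Let x₁ be real, x₂ = x₁/2, and Q = 1 + x₁². Then atan((i·x₁ + 1)/√Q) - atan((i·x₁ - 1)/√Q) = π/2, where atan is the principal branch of the complex inverse tangent. -/

import Mathlib

open Complex

/-- The principal branch of the complex inverse tangent,
`atan z = (i/2)(log(1 - iz) - log(1 + iz))`. -/
noncomputable def catan (z : ℂ) : ℂ :=
  I / 2 * (Complex.log (1 - I * z) - Complex.log (1 + I * z))

lemma arg_eq_arctan' {z : ℂ} (hz : 0 < z.re) : Complex.arg z = Real.arctan (z.im / z.re) := by
  have h2 : Complex.arg z < Real.pi / 2 := arg_lt_pi_div_two_iff.mpr (Or.inl hz)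
  have := Real.arctan_tan (neg_pi_div_two_lt_arg_iff.mpr (Or.inl hz)) h2
  rw [Complex.tan_arg] at this
  exact this.symm

lemma log_pair (a s : ℝ) (ha : 0 < a) (hs : 0 < s) :
    Complex.log (((a : ℂ) - I) / s) - Complex.log (((a : ℂ) + I) / s)
      = -(2 * Real.arctan (1 / a)) * I := by
  have hre1 : ((((a : ℂ) - I) / s)).re = a / s := by simp
  have hre2 : ((((a : ℂ) + I) / s)).re = a / s := by simp
  have hpos : (0:ℝ) < a / s := div_pos ha hs
  have h1 : Complex.arg (((a : ℂ) - I) / s) = Real.arctan (-(1 / a)) := by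
    rw [arg_eq_arctan' (by rw [hre1]; exact hpos)]
    congr 1
    field_simp
    rw [hre1]
    simp
    field_simp
  have h2 : Complex.arg (((a : ℂ) + I) / s) = Real.arctan (1 / a) := by
    rw [arg_eq_arctan' (by rw [hre2]; exact hpos)]
    congr 1
    field_simp
    rw [hre2]
    simp
    field_simp
  have habs : ‖((a : ℂ) - I) / s‖ = ‖((a : ℂ) + I) / s‖ := by
    simp [norm_div, Complex.norm_def, Complex.normSq_apply]
  apply Complex.ext
  · rw [Complex.sub_re, Complex.log_re, Complex.log_re, habs]
    simp [-Complex.ofReal_arctan]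
  · simp [Complex.log_im, h1, h2, Real.arctan_neg, -Complex.ofReal_arctan]
    ring

/-- For real `x₁` and `Q = 1 + x₁²`,
`atan((i x₁ + 1)/√Q) - atan((i x₁ - 1)/√Q) = π/2`. -/
theorem stmt17 (x₁ : ℝ) :
    catan ((I * x₁ + 1) / (Real.sqrt (1 + x₁ ^ 2) : ℂ))
      - catan ((I * x₁ - 1) / (Real.sqrt (1 + x₁ ^ 2) : ℂ))
      = Real.pi / 2 := by
  set s := Real.sqrt (1 + x₁ ^ 2) with hs_def
  have hs2 : s ^ 2 = 1 + x₁ ^ 2 := Real.sq_sqrt (by positivity)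
  have hs : 0 < s := Real.sqrt_pos.mpr (by positivity)
  have hxs : |x₁| < s := by
    nlinarith [abs_nonneg x₁, _root_.sq_abs x₁]
  have ha : 0 < s + x₁ := by cases abs_lt.mp hxs; linarith
  have hb : 0 < s - x₁ := by cases abs_lt.mp hxs; linarith
  have hsC : (s : ℂ) ≠ 0 := by exact_mod_cast hs.ne'
  have e1 : (1 : ℂ) - I * ((I * (x₁:ℂ) + 1) / (s : ℂ)) = (((s + x₁ : ℝ) : ℂ) - I) / s := by
    field_simp
    push_cast
    linear_combination (-(x₁:ℂ)) * Complex.I_sq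
  have e2 : (1 : ℂ) + I * ((I * (x₁:ℂ) + 1) / (s : ℂ)) = (((s - x₁ : ℝ) : ℂ) + I) / s := by
    field_simp
    push_cast
    linear_combination ((x₁:ℂ)) * Complex.I_sq
  have e3 : (1 : ℂ) - I * ((I * (x₁:ℂ) - 1) / (s : ℂ)) = (((s + x₁ : ℝ) : ℂ) + I) / s := by
    field_simp
    push_cast
    linear_combination (-(x₁:ℂ)) * Complex.I_sq
  have e4 : (1 : ℂ) + I * ((I * (x₁:ℂ) - 1) / (s : ℂ)) = (((s - x₁ : ℝ) : ℂ) - I) / s := by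
    field_simp
    push_cast
    linear_combination ((x₁:ℂ)) * Complex.I_sq
  have hab : (s + x₁) * (s - x₁) = 1 := by nlinarith
  have hinv : 1 / (s + x₁) = s - x₁ := by
    field_simp
    linarith [hab]
  have hsum : Real.arctan (1 / (s + x₁)) + Real.arctan (1 / (s - x₁)) = Real.pi / 2 := by
    rw [hinv, one_div, Real.arctan_inv_of_pos hb]
    ring
  have hsumC : ((Real.arctan (1 / (s + x₁)) : ℝ) : ℂ) + ((Real.arctan (1 / (s - x₁)) : ℝ) : ℂ)
      = (Real.pi : ℂ) / 2 := by exact_mod_cast congrArg (fun r : ℝ => (r : ℂ)) hsum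
  have P1 := log_pair (s + x₁) s ha hs
  have P2 := log_pair (s - x₁) s hb hs
  simp only [catan]
  rw [e1, e2, e3, e4]
  linear_combination (I/2) * P1 + (I/2) * P2 + hsumC
    - (((Real.arctan (1 / (s + x₁)) : ℝ) : ℂ) + ((Real.arctan (1 / (s - x₁)) : ℝ) : ℂ)) * Complex.I_sq
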